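/- There exists ε > 0 such that every p = (x,y,θ) ∈ ℝ²×(−π,π] with d(p, (0,0,0)) < ε belongs to the patch P(0,0,0) = { (x,y,θ) : |x(1 + cos θ) + y sin θ| < λ }. In other words, a sufficiently small metric ball of the cortical distance around the origin is contained in the patch around the origin. -/

import Mathlib

open MeasureTheory

/-- Rotation of the plane by angle `θ`. -/
noncomputable def rot (θ : ℝ) (w : ℝ × ℝ) : ℝ × ℝ :=
  (w.1 * Real.cos θ - w.2 * Real.sin θ, w.1 * Real.sin θ + w.2 * Real.cos θ)

/-- The mother Gabor filter `ψ₀(u,v) = exp(2πiu/λ)·exp(−(u²+v²)/(2σ²))`. -/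
noncomputable def gaborMother (lam sg : ℝ) (w : ℝ × ℝ) : ℂ :=
  Complex.exp (2 * (Real.pi : ℂ) * Complex.I * (w.1 : ℂ) / (lam : ℂ)) *
    Complex.exp (-(((w.1 ^ 2 + w.2 ^ 2) / (2 * sg ^ 2) : ℝ) : ℂ))

/-- The Gabor filter `ψ_{x,y,θ}(u,v) = ψ₀(R_{−θ}((u,v)−(x,y)))` for `p = (x,y,θ)`. -/
noncomputable def gabor (lam sg : ℝ) (p : ℝ × ℝ × ℝ) (w : ℝ × ℝ) : ℂ :=
  gaborMother lam sg (rot (-p.2.2) (w - (p.1, p.2.1)))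

/-- The cortical distance `d(p,q) = ‖ψ_p − ψ_q‖_{L²}`. -/
noncomputable def cdist (lam sg : ℝ) (p q : ℝ × ℝ × ℝ) : ℝ :=
  Real.sqrt (∫ w : ℝ × ℝ, ‖gabor lam sg p w - gabor lam sg q w‖ ^ 2)

lemma gauss2_int {b : ℝ} (hb : 0 < b) :
    Integrable (fun w : ℝ × ℝ => Real.exp (-b * (w.1 ^ 2 + w.2 ^ 2))) := by
  have h : (fun w : ℝ × ℝ => Real.exp (-b * (w.1 ^ 2 + w.2 ^ 2)))
      = fun w : ℝ × ℝ => Real.exp (-b * w.1 ^ 2) * Real.exp (-b * w.2 ^ 2) := by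
    funext w; rw [← Real.exp_add]; ring_nf
  rw [h, MeasureTheory.Measure.volume_eq_prod]
  exact (integrable_exp_neg_mul_sq hb).mul_prod (integrable_exp_neg_mul_sq hb)

lemma gauss2_val {b : ℝ} (hb : 0 < b) :
    ∫ w : ℝ × ℝ, Real.exp (-b * (w.1 ^ 2 + w.2 ^ 2)) = Real.pi / b := by
  have h : (fun w : ℝ × ℝ => Real.exp (-b * (w.1 ^ 2 + w.2 ^ 2)))
      = fun w : ℝ × ℝ => Real.exp (-b * w.1 ^ 2) * Real.exp (-b * w.2 ^ 2) := by
    funext w; rw [← Real.exp_add]; ring_nf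
  rw [h, MeasureTheory.Measure.volume_eq_prod]
  rw [integral_prod_mul (f := fun u : ℝ => Real.exp (-b * u ^ 2))
    (g := fun v : ℝ => Real.exp (-b * v ^ 2)), integral_gaussian,
    Real.mul_self_sqrt (by positivity)]

lemma gauss2_shift_val {b : ℝ} (hb : 0 < b) (m : ℝ × ℝ) :
    ∫ w : ℝ × ℝ, Real.exp (-b * ((w.1 - m.1) ^ 2 + (w.2 - m.2) ^ 2)) = Real.pi / b := by
  have h := integral_sub_right_eq_self (μ := volume)
    (fun w : ℝ × ℝ => Real.exp (-b * (w.1 ^ 2 + w.2 ^ 2))) m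
  simp only [Prod.fst_sub, Prod.snd_sub] at h
  rw [h]; exact gauss2_val hb

lemma gauss2_shift_int {b : ℝ} (hb : 0 < b) (m : ℝ × ℝ) :
    Integrable (fun w : ℝ × ℝ => Real.exp (-b * ((w.1 - m.1) ^ 2 + (w.2 - m.2) ^ 2))) := by
  simpa only [Prod.fst_sub, Prod.snd_sub] using (gauss2_int hb).comp_sub_right m

lemma rot_sq (θ : ℝ) (v : ℝ × ℝ) :
    (rot θ v).1 ^ 2 + (rot θ v).2 ^ 2 = v.1 ^ 2 + v.2 ^ 2 := by
  have h := Real.sin_sq_add_cos_sq θ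
  simp only [rot]
  nlinarith [h]

lemma abs_gabor (lam sg x y θ : ℝ) (w : ℝ × ℝ) :
    ‖gabor lam sg (x, y, θ) w‖
      = Real.exp (-(((w.1 - x) ^ 2 + (w.2 - y) ^ 2) / (2 * sg ^ 2))) := by
  unfold gabor gaborMother
  rw [norm_mul, Complex.norm_exp, Complex.norm_exp]
  have h1 : (2 * (Real.pi : ℂ) * Complex.I *
      ((rot (-(x, y, θ).2.2) (w - ((x, y, θ).1, (x, y, θ).2.1))).1 : ℂ) / (lam : ℂ)).re = 0 := by
    simp [Complex.div_re, Complex.mul_re, Complex.mul_im]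
  rw [h1, Real.exp_zero, one_mul]
  have h2 := rot_sq (-θ) (w - (x, y))
  simp only [Complex.neg_re, Complex.ofReal_re]
  congr 1
  simp only [Prod.fst_sub, Prod.snd_sub] at h2 ⊢
  rw [h2]

/-- A sufficiently small metric ball of the cortical distance around the origin is
contained in the patch `P(0,0,0) = {(x,y,θ) : |x(1+cos θ) + y sin θ| < λ}`. -/
theorem statement7 (lam sg : ℝ) (hlam : 0 < lam) (hsg : 0 < sg) :
    ∃ ε > 0, ∀ x y θ : ℝ, θ ∈ Set.Ioc (-Real.pi) Real.pi →
      cdist lam sg (x, y, θ) (0, 0, 0) < ε →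
      |x * (1 + Real.cos θ) + y * Real.sin θ| < lam := by
  set K : ℝ := Real.pi * sg ^ 2 * (2 - 2 * Real.exp (-(lam ^ 2 / (16 * sg ^ 2)))) with hKdef
  have hexp1 : Real.exp (-(lam ^ 2 / (16 * sg ^ 2))) < 1 := by
    rw [Real.exp_lt_one_iff]
    have : 0 < lam ^ 2 / (16 * sg ^ 2) := by positivity
    linarith
  have hK : 0 < K := by
    apply mul_pos (by positivity); linarith
  refine ⟨Real.sqrt K, Real.sqrt_pos.mpr hK, fun x y θ _ hd => ?_⟩
  by_contra hE
  push_neg at hE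
  -- from |E| ≥ lam deduce x² + y² ≥ lam²/4
  have hE2 : lam ^ 2 ≤ (x * (1 + Real.cos θ) + y * Real.sin θ) ^ 2 := by
    have := pow_le_pow_left₀ hlam.le hE 2
    rwa [sq_abs] at this
  have hq : lam ^ 2 / 4 ≤ x ^ 2 + y ^ 2 := by
    nlinarith [sq_nonneg (x * Real.sin θ - y * (1 + Real.cos θ)),
      Real.sin_sq_add_cos_sq θ, Real.cos_le_one θ, sq_nonneg x, sq_nonneg y]
  -- notation
  set G₁ : ℝ × ℝ → ℝ := fun w => Real.exp (-(((w.1 - x) ^ 2 + (w.2 - y) ^ 2) / (2 * sg ^ 2)))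
    with hG₁def
  set G₀ : ℝ × ℝ → ℝ := fun w => Real.exp (-((w.1 ^ 2 + w.2 ^ 2) / (2 * sg ^ 2))) with hG₀def
  have hb : (0 : ℝ) < 1 / sg ^ 2 := by positivity
  -- |ψ_p| = G₁, |ψ_0| = G₀
  have habs1 : ∀ w, ‖gabor lam sg (x, y, θ) w‖ = G₁ w := fun w =>
    abs_gabor lam sg x y θ w
  have habs0 : ∀ w, ‖gabor lam sg (0, 0, 0) w‖ = G₀ w := by
    intro w
    have := abs_gabor lam sg 0 0 0 w
    simpa using this
  -- squares and cross term as Gaussians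
  have hG1sq : (fun w => G₁ w ^ 2)
      = fun w : ℝ × ℝ => Real.exp (-(1 / sg ^ 2) * ((w.1 - x) ^ 2 + (w.2 - y) ^ 2)) := by
    funext w
    rw [hG₁def, sq, ← Real.exp_add]
    congr 1
    field_simp
    ring
  have hG0sq : (fun w => G₀ w ^ 2)
      = fun w : ℝ × ℝ => Real.exp (-(1 / sg ^ 2) * (w.1 ^ 2 + w.2 ^ 2)) := by
    funext w
    rw [hG₀def, sq, ← Real.exp_add]
    congr 1
    field_simp
    ring
  have hcross : (fun w => G₁ w * G₀ w)
      = fun w : ℝ × ℝ => Real.exp (-((x ^ 2 + y ^ 2) / (4 * sg ^ 2))) *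
          Real.exp (-(1 / sg ^ 2) * ((w.1 - x / 2) ^ 2 + (w.2 - y / 2) ^ 2)) := by
    funext w
    rw [hG₁def, hG₀def, ← Real.exp_add, ← Real.exp_add]
    congr 1
    field_simp
    ring
  -- integrability
  have int1 : Integrable (fun w => G₁ w ^ 2) := by
    rw [hG1sq]; exact gauss2_shift_int hb (x, y)
  have int0 : Integrable (fun w => G₀ w ^ 2) := by
    rw [hG0sq]; simpa using gauss2_shift_int hb (0, 0)
  have intc : Integrable (fun w => G₁ w * G₀ w) := by
    rw [hcross]; exact (gauss2_shift_int hb (x / 2, y / 2)).const_mul _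
  -- integral values
  have val1 : ∫ w : ℝ × ℝ, G₁ w ^ 2 = Real.pi * sg ^ 2 := by
    rw [hG1sq, gauss2_shift_val hb (x, y)]; field_simp
  have val0 : ∫ w : ℝ × ℝ, G₀ w ^ 2 = Real.pi * sg ^ 2 := by
    rw [hG0sq]
    have := gauss2_shift_val hb (0, 0)
    simp only [Prod.fst, Prod.snd, sub_zero] at this
    rw [show (fun w : ℝ × ℝ => Real.exp (-(1 / sg ^ 2) * (w.1 ^ 2 + w.2 ^ 2)))
      = fun w : ℝ × ℝ => Real.exp (-(1 / sg ^ 2) * ((w.1 - (0:ℝ)) ^ 2 + (w.2 - (0:ℝ)) ^ 2))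
      by funext w; ring_nf]
    rw [gauss2_shift_val hb (0, 0)]; field_simp
  have valc : ∫ w : ℝ × ℝ, G₁ w * G₀ w
      = Real.exp (-((x ^ 2 + y ^ 2) / (4 * sg ^ 2))) * (Real.pi * sg ^ 2) := by
    rw [hcross, integral_const_mul, gauss2_shift_val hb (x / 2, y / 2)]
    field_simp
  -- the squared-difference Gaussian integral
  have intdiff : Integrable (fun w => (G₁ w - G₀ w) ^ 2) := by
    have h : (fun w => (G₁ w - G₀ w) ^ 2)
        = fun w => G₁ w ^ 2 - 2 * (G₁ w * G₀ w) + G₀ w ^ 2 := by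
      funext w; ring
    rw [h]
    exact (int1.sub (intc.const_mul 2)).add int0
  have valdiff : ∫ w : ℝ × ℝ, (G₁ w - G₀ w) ^ 2
      = Real.pi * sg ^ 2 * (2 - 2 * Real.exp (-((x ^ 2 + y ^ 2) / (4 * sg ^ 2)))) := by
    have h : (fun w : ℝ × ℝ => (G₁ w - G₀ w) ^ 2)
        = fun w => G₁ w ^ 2 - 2 * (G₁ w * G₀ w) + G₀ w ^ 2 := by
      funext w; ring
    have i12 : Integrable (fun w : ℝ × ℝ => G₁ w ^ 2 - 2 * (G₁ w * G₀ w)) := by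
      exact int1.sub (intc.const_mul 2)
    have i2 : Integrable (fun w : ℝ × ℝ => 2 * (G₁ w * G₀ w)) := intc.const_mul 2
    rw [h, integral_add i12 int0, integral_sub int1 i2, integral_const_mul, val1, val0, valc]
    ring
  -- the difference integral is at least K
  have hKle : K ≤ ∫ w : ℝ × ℝ, (G₁ w - G₀ w) ^ 2 := by
    rw [valdiff, hKdef]
    have hee : Real.exp (-((x ^ 2 + y ^ 2) / (4 * sg ^ 2)))
        ≤ Real.exp (-(lam ^ 2 / (16 * sg ^ 2))) := by
      apply Real.exp_le_exp.mpr
      rw [neg_le_neg_iff]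
      rw [div_le_div_iff₀ (by positivity) (by positivity)]
      nlinarith
    nlinarith [Real.pi_pos, sq_nonneg sg, mul_pos Real.pi_pos (pow_pos hsg 2)]
  -- integrability of the main integrand
  have hcont : Continuous fun w : ℝ × ℝ =>
      ‖gabor lam sg (x, y, θ) w - gabor lam sg (0, 0, 0) w‖ ^ 2 := by
    have hg : ∀ p : ℝ × ℝ × ℝ, Continuous (gabor lam sg p) := by
      intro p
      unfold gabor gaborMother rot
      fun_prop
    exact (continuous_norm.comp ((hg _).sub (hg _))).pow 2
  have hbound : ∀ w : ℝ × ℝ,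
      ‖gabor lam sg (x, y, θ) w - gabor lam sg (0, 0, 0) w‖ ^ 2
        ≤ (G₁ w + G₀ w) ^ 2 := by
    intro w
    have h1 : ‖gabor lam sg (x, y, θ) w - gabor lam sg (0, 0, 0) w‖
        ≤ G₁ w + G₀ w := by
      calc ‖gabor lam sg (x, y, θ) w - gabor lam sg (0, 0, 0) w‖
          ≤ ‖gabor lam sg (x, y, θ) w‖ + ‖gabor lam sg (0, 0, 0) w‖ :=
            norm_sub_le _ _
        _ = G₁ w + G₀ w := by rw [habs1, habs0]
    exact pow_le_pow_left₀ (norm_nonneg _) h1 2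
  have intsum : Integrable (fun w => (G₁ w + G₀ w) ^ 2) := by
    have h : (fun w => (G₁ w + G₀ w) ^ 2)
        = fun w => G₁ w ^ 2 + 2 * (G₁ w * G₀ w) + G₀ w ^ 2 := by
      funext w; ring
    rw [h]
    exact (int1.add (intc.const_mul 2)).add int0
  have intF : Integrable (fun w : ℝ × ℝ =>
      ‖gabor lam sg (x, y, θ) w - gabor lam sg (0, 0, 0) w‖ ^ 2) := by
    refine intsum.mono hcont.aestronglyMeasurable (ae_of_all _ fun w => ?_)
    rw [Real.norm_eq_abs, Real.norm_eq_abs, abs_of_nonneg (by positivity),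
      abs_of_nonneg (by positivity)]
    exact hbound w
  -- pointwise lower bound
  have hlow : ∀ w : ℝ × ℝ, (G₁ w - G₀ w) ^ 2
      ≤ ‖gabor lam sg (x, y, θ) w - gabor lam sg (0, 0, 0) w‖ ^ 2 := by
    intro w
    have h1 : |G₁ w - G₀ w|
        ≤ ‖gabor lam sg (x, y, θ) w - gabor lam sg (0, 0, 0) w‖ := by
      rw [← habs1 w, ← habs0 w]
      simpa using
        abs_norm_sub_norm_le (gabor lam sg (x, y, θ) w) (gabor lam sg (0, 0, 0) w)
    calc (G₁ w - G₀ w) ^ 2 = |G₁ w - G₀ w| ^ 2 := (sq_abs _).symm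
      _ ≤ _ := pow_le_pow_left₀ (abs_nonneg _) h1 2
  have hmono : ∫ w : ℝ × ℝ, (G₁ w - G₀ w) ^ 2
      ≤ ∫ w : ℝ × ℝ,
        ‖gabor lam sg (x, y, θ) w - gabor lam sg (0, 0, 0) w‖ ^ 2 :=
    integral_mono intdiff intF hlow
  -- conclude
  have hcd : Real.sqrt K ≤ cdist lam sg (x, y, θ) (0, 0, 0) := by
    unfold cdist
    exact Real.sqrt_le_sqrt (le_trans hKle hmono)
  linarith
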